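/- Let G^i be a fixed graph on n vertices with m^i ≥ 1 edges and edge indicator vector p^i, and let p^j be the edge indicator vector of an independent Erdős–Rényi G(n, m^j) random graph with m^j ≥ 1. With OE = (p^i)'p^j / sqrt(m^i m^j), the second moment satisfies E[OE²] = 2/(n(n-1)) + 4(m^i − 1)(m^j − 1)/(n(n-2)(n²-1)). -/

import Mathlib

open Finset


variable {α : Type*} [DecidableEq α] [Fintype α]

lemma count_contains (t : Finset α) (m : ℕ) (hm : t.card ≤ m) :
    ((univ.powersetCard m).filter (fun s => t ⊆ s)).card
      = (Fintype.card α - t.card).choose (m - t.card) := by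
  rw [← card_univ, ← card_sdiff_of_subset (subset_univ t), ← card_powersetCard]
  apply card_bij' (fun s _ => s \ t) (fun u _ => u ∪ t)
  · intro s hs
    simp only [mem_filter, mem_powersetCard_univ] at hs
    rw [mem_powersetCard]
    exact ⟨sdiff_subset_sdiff (subset_univ s) le_rfl,
      by rw [card_sdiff_of_subset hs.2, hs.1]⟩
  · intro u hu
    rw [mem_powersetCard] at hu
    have hdisj : Disjoint u t := by
      intro x hxu hxt
      exact fun y hy => absurd (hxt hy) (mem_sdiff.mp (hu.1 (hxu hy))).2
    simp only [mem_filter, mem_powersetCard_univ]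
    refine ⟨?_, subset_union_right⟩
    rw [card_union_of_disjoint hdisj, hu.2, Nat.sub_add_cancel hm]
  · intro s hs
    simp only [mem_filter, mem_powersetCard_univ] at hs
    exact sdiff_union_of_subset hs.2
  · intro u hu
    rw [mem_powersetCard] at hu
    have hdisj : Disjoint u t := by
      intro x hxu hxt
      exact fun y hy => absurd (hxt hy) (mem_sdiff.mp (hu.1 (hxu hy))).2
    rw [union_sdiff_right, sdiff_eq_self_of_disjoint hdisj]

lemma count_contains_empty (t : Finset α) (m : ℕ) (hm : m < t.card) :
    ((univ.powersetCard m).filter (fun s => t ⊆ s)).card = 0 := by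
  rw [card_eq_zero, filter_eq_empty_iff]
  intro s hs hts
  rw [mem_powersetCard_univ] at hs
  exact absurd (card_le_card hts) (by omega)

lemma sum_sq_inter (N mj : ℕ) (A : Finset (Fin N)) :
    ∑ s ∈ (univ : Finset (Fin N)).powersetCard mj, ((A ∩ s).card)^2
      = ∑ k ∈ A, ∑ l ∈ A,
          ((univ.powersetCard mj).filter (fun s => k ∈ s ∧ l ∈ s)).card := by
  have h1 : ∀ s : Finset (Fin N), ((A ∩ s).card)^2
      = ∑ k ∈ A, ∑ l ∈ A, (if k ∈ s ∧ l ∈ s then 1 else 0) := by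
    intro s
    have : (A ∩ s).card = ∑ k ∈ A, (if k ∈ s then 1 else 0) := by
      rw [← filter_mem_eq_inter, card_filter]
    rw [this, sq, sum_mul_sum]
    refine sum_congr rfl fun k _ => sum_congr rfl fun l _ => ?_
    split_ifs with h h1 h2 <;> simp_all
  simp_rw [h1]
  rw [sum_comm]
  refine sum_congr rfl fun k _ => ?_
  rw [sum_comm]
  refine sum_congr rfl fun l _ => ?_
  rw [card_filter]

private theorem er_overlap_second_moment' (n N mi mj : ℕ) (hn : 3 ≤ n)
    (hN : 2 * N = n * (n - 1)) (hmi : 1 ≤ mi) (hmiN : mi ≤ N)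
    (hmj : 1 ≤ mj) (hmjN : mj ≤ N) (A : Finset (Fin N)) (hA : A.card = mi) :
    (∑ s ∈ (univ : Finset (Fin N)).powersetCard mj,
        (((A ∩ s).card : ℝ) / Real.sqrt (mi * mj)) ^ 2) / (N.choose mj) =
      2 / ((n : ℝ) * ((n : ℝ) - 1)) +
        4 * ((mi : ℝ) - 1) * ((mj : ℝ) - 1) /
          ((n : ℝ) * ((n : ℝ) - 2) * ((n : ℝ) ^ 2 - 1)) := by
  have hN3 : 3 ≤ N := by
    have : 3 * 2 ≤ n * (n - 1) := Nat.mul_le_mul hn (by omega)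
    omega
  set c1 := (N-1).choose (mj-1) with hc1def
  set c2 := if 2 ≤ mj then (N-2).choose (mj-2) else 0 with hc2def
  set C := N.choose mj with hCdef
  -- value of the pair counts
  have hK : ∀ k l : Fin N,
      ((univ.powersetCard mj).filter (fun s => k ∈ s ∧ l ∈ s)).card
        = if k = l then c1 else c2 := by
    intro k l
    by_cases hkl : k = l
    · subst hkl
      simp only [if_pos rfl]
      have heq : (univ.powersetCard mj).filter (fun s => k ∈ s ∧ k ∈ s)
          = (univ.powersetCard mj).filter (fun s => ({k} : Finset (Fin N)) ⊆ s) :=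
        filter_congr (fun s _ => by simp)
      rw [heq, count_contains _ _ (by simpa using hmj)]
      simp [hc1def]
    · simp only [if_neg hkl]
      have hcard : ({k, l} : Finset (Fin N)).card = 2 := card_pair hkl
      have heq : (univ.powersetCard mj).filter (fun s => k ∈ s ∧ l ∈ s)
          = (univ.powersetCard mj).filter (fun s => ({k, l} : Finset (Fin N)) ⊆ s) :=
        filter_congr (fun s _ => by simp [insert_subset_iff])
      rw [heq]
      by_cases h2 : 2 ≤ mj
      · rw [count_contains _ _ (by omega)]
        simp [hc2def, h2, hcard]
      · rw [count_contains_empty _ _ (by omega)]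
        simp [hc2def, h2]
  -- the key natural-number sum
  have hS : ∑ s ∈ (univ : Finset (Fin N)).powersetCard mj, ((A ∩ s).card)^2
      = mi * c1 + mi * (mi - 1) * c2 := by
    rw [sum_sq_inter]
    have : ∀ k ∈ A, ∑ l ∈ A,
        ((univ.powersetCard mj).filter (fun s => k ∈ s ∧ l ∈ s)).card
          = c1 + (mi - 1) * c2 := by
      intro k hk
      rw [← add_sum_erase _ _ hk, hK k k, if_pos rfl]
      congr 1
      rw [sum_congr rfl (fun l hl => by
        rw [hK k l, if_neg (fun h => (mem_erase.mp hl).1 h.symm)])]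
      rw [sum_const, card_erase_of_mem hk, hA, smul_eq_mul]
    rw [sum_congr rfl this, sum_const, hA, smul_eq_mul, Nat.mul_add, Nat.mul_assoc]
  -- choose identities
  have hid1 : N * c1 = C * mj := by
    have := Nat.add_one_mul_choose_eq (N-1) (mj-1)
    rw [show N - 1 + 1 = N by omega, show mj - 1 + 1 = mj by omega] at this
    exact this
  have hid2 : N * (N - 1) * c2 = C * (mj * (mj - 1)) := by
    by_cases h2 : 2 ≤ mj
    · have h := Nat.add_one_mul_choose_eq (N-2) (mj-2)
      rw [show N - 2 + 1 = N - 1 by omega, show mj - 2 + 1 = mj - 1 by omega] at h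
      have hc2 : c2 = (N-2).choose (mj-2) := by simp [hc2def, h2]
      calc N * (N-1) * c2 = N * ((N-1) * (N-2).choose (mj-2)) := by rw [hc2]; ring
        _ = N * ((N-1).choose (mj-1) * (mj-1)) := by rw [h]
        _ = N * c1 * (mj-1) := by rw [hc1def]; ring
        _ = C * mj * (mj - 1) := by rw [hid1]
        _ = C * (mj * (mj-1)) := by ring
    · have : mj = 1 := by omega
      subst this
      simp [hc2def]
  -- pass to the reals
  have hCpos : 0 < C := Nat.choose_pos hmjN
  have hCne : (C : ℝ) ≠ 0 := Nat.cast_ne_zero.mpr hCpos.ne'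
  have hmine : (mi : ℝ) ≠ 0 := Nat.cast_ne_zero.mpr (by omega)
  have hmjne : (mj : ℝ) ≠ 0 := Nat.cast_ne_zero.mpr (by omega)
  have hNne : (N : ℝ) ≠ 0 := Nat.cast_ne_zero.mpr (by omega)
  have hN1ne : (N : ℝ) - 1 ≠ 0 := by
    have : (3:ℝ) ≤ N := by exact_mod_cast hN3
    linarith
  have hnne : (n : ℝ) ≠ 0 := Nat.cast_ne_zero.mpr (by omega)
  have hn1 : (n : ℝ) - 1 ≠ 0 := by
    have : (3:ℝ) ≤ n := by exact_mod_cast hn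
    linarith
  have hn2 : (n : ℝ) - 2 ≠ 0 := by
    have : (3:ℝ) ≤ n := by exact_mod_cast hn
    linarith
  have hnsq : (n : ℝ) ^ 2 - 1 ≠ 0 := by
    have : (3:ℝ) ≤ n := by exact_mod_cast hn
    nlinarith
  have H1 : (N : ℝ) * c1 = C * mj := by exact_mod_cast congrArg (Nat.cast : ℕ → ℝ) hid1
  have H2 : (N : ℝ) * ((N:ℝ) - 1) * c2 = C * (mj * ((mj:ℝ) - 1)) := by
    have := congrArg (Nat.cast : ℕ → ℝ) hid2
    push_cast [Nat.cast_sub (by omega : 1 ≤ N), Nat.cast_sub hmj] at this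
    linarith [this]
  have HNr : 2 * (N : ℝ) = n * ((n:ℝ) - 1) := by
    have := congrArg (Nat.cast : ℕ → ℝ) hN
    push_cast [Nat.cast_sub (by omega : 1 ≤ n)] at this
    linarith [this]
  have HS : (∑ s ∈ (univ : Finset (Fin N)).powersetCard mj,
      (((A ∩ s).card : ℝ) / Real.sqrt (mi * mj)) ^ 2)
        = ((mi:ℝ) * c1 + mi * ((mi:ℝ) - 1) * c2) / (mi * mj) := by
    have hmm : (0:ℝ) ≤ (mi:ℝ) * mj := by positivity
    have hsq : (Real.sqrt ((mi:ℝ) * mj)) ^ 2 = (mi:ℝ) * mj := Real.sq_sqrt hmm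
    have : ∀ s : Finset (Fin N), (((A ∩ s).card : ℝ) / Real.sqrt (mi * mj)) ^ 2
        = ((A ∩ s).card : ℝ)^2 / ((mi:ℝ) * mj) := by
      intro s
      rw [div_pow, hsq]
    rw [sum_congr rfl (fun s _ => this s), ← sum_div]
    congr 1
    have := congrArg (Nat.cast : ℕ → ℝ) hS
    push_cast [Nat.cast_sub hmi] at this ⊢
    linarith [this]
  rw [HS]
  rw [div_div, show ((mi:ℝ) * mj * C) = mi * mj * C by ring]
  have step1 : ((mi:ℝ) * c1 + mi * ((mi:ℝ) - 1) * c2) / ((mi:ℝ) * mj * C)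
      = 1 / (N:ℝ) + ((mi:ℝ)-1) * ((mj:ℝ)-1) / ((N:ℝ) * ((N:ℝ)-1)) := by
    field_simp
    linear_combination ((N:ℝ)-1) * H1 + ((mi:ℝ)-1) * H2
  rw [step1]
  have e1 : 2 / ((n:ℝ) * ((n:ℝ)-1)) = 1 / (N:ℝ) := by
    field_simp
    linear_combination HNr
  have e2 : 4 * ((mi:ℝ)-1) * ((mj:ℝ)-1) / ((n:ℝ) * ((n:ℝ)-2) * ((n:ℝ)^2-1))
      = ((mi:ℝ)-1) * ((mj:ℝ)-1) / ((N:ℝ) * ((N:ℝ)-1)) := by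
    field_simp
    linear_combination (((mi:ℝ)-1) * ((mj:ℝ)-1) * (2*(N:ℝ) + (n:ℝ)*((n:ℝ)-1) - 2)) * HNr
  rw [e1, e2]

noncomputable def erExpect (N m : ℕ) (f : Finset (Fin N) → ℝ) : ℝ :=
  (∑ s ∈ (univ : Finset (Fin N)).powersetCard m, f s) / (N.choose m)

/-- Second moment of the cosine overlap `OE = (p^i)'p^j / √(mi·mj)` between a fixed
`mi`-edge graph (edge set `A`) and a `G(n,mj)` random graph:
`E[OE²] = 2/(n(n-1)) + 4(mi−1)(mj−1)/(n(n-2)(n²-1))`. -/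
theorem er_overlap_second_moment (n N mi mj : ℕ) (hn : 3 ≤ n)
    (hN : 2 * N = n * (n - 1)) (hmi : 1 ≤ mi) (hmiN : mi ≤ N)
    (hmj : 1 ≤ mj) (hmjN : mj ≤ N) (A : Finset (Fin N)) (hA : A.card = mi) :
    erExpect N mj (fun s => (((A ∩ s).card : ℝ) / Real.sqrt (mi * mj)) ^ 2) =
      2 / ((n : ℝ) * ((n : ℝ) - 1)) +
        4 * ((mi : ℝ) - 1) * ((mj : ℝ) - 1) /
          ((n : ℝ) * ((n : ℝ) - 2) * ((n : ℝ) ^ 2 - 1)) := by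
  exact er_overlap_second_moment' n N mi mj hn hN hmi hmiN hmj hmjN A hA
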